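/- Let A be an abelian category and K, K', Y objects with K' ∈ add K. The map Ext¹(Y, K') → Hom_{Γ(K)}(Hom(K', K), Ext¹(Y, K)) sending a class [ξ] to the connecting map c(ξ, K) is an isomorphism of abelian groups. -/

import Mathlib

set_option linter.unusedSectionVars false

open CategoryTheory Abelian Limits

universe w v u

attribute [local instance] CategoryTheory.Abelian.hasFiniteBiproducts

variable {A : Type u} [Category.{v} A] [Abelian A]

/-- `M` belongs to `add K`: it is a direct summand of a finite direct sum of copies of `K`. -/
def InAdd (K M : A) : Prop :=
  ∃ (n : ℕ) (s : M ⟶ ⨁ (fun _ : Fin n => K)) (r : (⨁ fun _ : Fin n => K) ⟶ M),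
    s ≫ r = 𝟙 M

/-- `α` factors through `α'`. -/
def Factors {X X' Y : A} (α : X ⟶ Y) (α' : X' ⟶ Y) : Prop :=
  ∃ v : X ⟶ X', v ≫ α' = α

/-- `α` and `α'` are right equivalent. -/
def RightEquiv {X X' Y : A} (α : X ⟶ Y) (α' : X' ⟶ Y) : Prop :=
  Factors α α' ∧ Factors α' α

/-- A morphism is right minimal. -/
def RightMinimal {X Y : A} (α : X ⟶ Y) : Prop :=
  ∀ v : X ⟶ X, v ≫ α = α → IsIso v

/-- A short exact sequence `0 → K → X → Y → 0`. -/
structure SES (K Y : A) where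
  X : A
  i : K ⟶ X
  p : X ⟶ Y
  zero : i ≫ p = 0
  shortExact : (ShortComplex.mk i p zero).ShortExact

variable [HasExt.{w} A]

lemma Ext.mk₀_add' {X Y : A} (f g : X ⟶ Y) :
    Ext.mk₀ (f + g) = Ext.mk₀ f + Ext.mk₀ g := by
  letI := HasDerivedCategory.standard A
  apply Ext.ext
  simp [Ext.add_hom, ShiftedHom.mk₀, Functor.map_add]

/-- The class `[ξ] ∈ Ext¹(Y, K)` of a short exact sequence `ξ`. -/
noncomputable def SES.cls {K Y : A} (E : SES K Y) : Ext Y K 1 :=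
  E.shortExact.extClass

/-- The class `[u.ξ]` of the pushout of `ξ` along `u`. -/
noncomputable def SES.push {K Y Z : A} (E : SES K Y) (u : K ⟶ Z) : Ext Y Z 1 :=
  E.cls.comp (Ext.mk₀ u) (add_zero 1)

noncomputable instance extSMulEnd (Y K : A) : SMul (End K) (Ext Y K 1) :=
  ⟨fun g e => e.comp (Ext.mk₀ g) (add_zero 1)⟩

lemma extSmul_def {Y K : A} (g : End K) (e : Ext Y K 1) :
    g • e = e.comp (Ext.mk₀ g) (add_zero 1) := rfl

/-- `Ext¹(Y, K)` as a left module over `Γ(K) = End K`, via pushout. -/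
noncomputable instance extModuleEnd (Y K : A) : Module (End K) (Ext Y K 1) where
  one_smul e := by rw [extSmul_def]; exact Ext.comp_mk₀_id e
  mul_smul g h e := by
    rw [extSmul_def, extSmul_def, extSmul_def,
      Ext.comp_assoc_of_third_deg_zero, Ext.mk₀_comp_mk₀]
    rfl
  smul_add g e f := by
    rw [extSmul_def, extSmul_def, extSmul_def]; exact Ext.add_comp e f _ _
  add_smul g h e := by
    rw [extSmul_def, extSmul_def, extSmul_def, Ext.mk₀_add', Ext.comp_add]
  zero_smul e := by rw [extSmul_def]; rw [Ext.mk₀_zero, Ext.comp_zero]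
  smul_zero g := by rw [extSmul_def]; exact Ext.zero_comp _ _ _ _ _

/-- The connecting map `c(ξ, K) : Hom(K₁, K) → Ext¹(Y, K)`, `u ↦ [u.ξ]`,
as a morphism of left `Γ(K) = End K`-modules. -/
noncomputable def SES.conn {K₁ Y : A} (E : SES K₁ Y) (K : A) :
    (K₁ ⟶ K) →ₗ[End K] Ext Y K 1 where
  toFun u := E.push u
  map_add' u v := by
    dsimp [SES.push]
    rw [Ext.mk₀_add', Ext.comp_add]
  map_smul' g u := by
    dsimp [SES.push]
    rw [End.smul_right, extSmul_def, Ext.comp_assoc_of_third_deg_zero,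
      Ext.mk₀_comp_mk₀]

/-- Right minimality for a morphism of modules. -/
def ModRightMinimal {R : Type*} [Ring R] {M N : Type*} [AddCommGroup M] [AddCommGroup N]
    [Module R M] [Module R N] (c : M →ₗ[R] N) : Prop :=
  ∀ g : M →ₗ[R] M, c.comp g = c → Function.Bijective g

universe w'

/-- The `R`-module `M` admits a projective cover. -/
def HasProjCover (R : Type*) [Ring R] (M : Type w') [AddCommGroup M] [Module R M] : Prop :=
  ∃ (P : Type w') (_ : AddCommGroup P) (_ : Module R P) (f : P →ₗ[R] M),
    Module.Projective R P ∧ Function.Surjective f ∧ ModRightMinimal f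

/-- `ξ` is a universal `L`-extension of `Y` by `K`. -/
def IsUniversalExt (K : A) {K₁ Y : A} (E : SES K₁ Y) (L : Submodule (End K) (Ext Y K 1)) :
    Prop :=
  InAdd K K₁ ∧ LinearMap.range (E.conn K) = L ∧ ModRightMinimal (E.conn K)

lemma InAdd.self (K : A) : InAdd K K := by
  refine ⟨1, biproduct.ι (fun _ : Fin 1 => K) (0 : Fin 1), biproduct.π (fun _ : Fin 1 => K) 0, ?_⟩
  simp

/-- The map `Ext¹(Y, K') → Hom_{Γ(K)}(Hom(K', K), Ext¹(Y, K))` sending a class `e`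
to the connecting map `f ↦ [f.e]` (pushout along `f`). -/
noncomputable def pushHom (K K' Y : A) (e : Ext Y K' 1) :
    (K' ⟶ K) →ₗ[End K] Ext Y K 1 where
  toFun f := e.comp (Ext.mk₀ f) (add_zero 1)
  map_add' f g := by
    rw [Ext.mk₀_add', Ext.comp_add]
  map_smul' r f := by
    show e.comp (Ext.mk₀ (f ≫ r)) _ = r • (e.comp (Ext.mk₀ f) (add_zero 1))
    rw [extSmul_def, Ext.comp_assoc_of_third_deg_zero, Ext.mk₀_comp_mk₀]

/-- for `K' ∈ add K`, the map `[ξ] ↦ c(ξ, K)` is an isomorphism of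
abelian groups `Ext¹(Y, K') ≅ Hom_{Γ(K)}(Hom(K', K), Ext¹(Y, K))`. -/

lemma Ext.mk₀_sum' {X Y : A} {ι : Type*} (t : Finset ι) (f : ι → (X ⟶ Y)) :
    Ext.mk₀ (∑ i ∈ t, f i) = ∑ i ∈ t, Ext.mk₀ (f i) := by
  classical
  induction t using Finset.induction with
  | empty => simp [Ext.mk₀_zero]
  | insert _ _ h ih => rw [Finset.sum_insert h, Finset.sum_insert h, Ext.mk₀_add', ih]

lemma Ext.comp_sum' {X Y Z : A} (e : Ext X Y 1) {ι : Type*} (t : Finset ι)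
    (f : ι → Ext Y Z 0) :
    e.comp (∑ i ∈ t, f i) (add_zero 1) = ∑ i ∈ t, e.comp (f i) (add_zero 1) := by
  classical
  induction t using Finset.induction with
  | empty => simp [Ext.comp_zero]
  | insert _ _ h ih => rw [Finset.sum_insert h, Finset.sum_insert h, Ext.comp_add, ih]

lemma Ext.sum_comp' {X Y Z : A} {ι : Type*} (t : Finset ι) (f : ι → Ext X Y 1)
    (g : Ext Y Z 0) :
    (∑ i ∈ t, f i).comp g (add_zero 1) = ∑ i ∈ t, (f i).comp g (add_zero 1) := by
  classical
  induction t using Finset.induction with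
  | empty => simp [Ext.zero_comp]
  | insert _ _ h ih => rw [Finset.sum_insert h, Finset.sum_insert h, Ext.add_comp, ih]

lemma Ext.comp_mk₀_comp_mk₀ {X Y Z W : A} (e : Ext X Y 1) (a : Y ⟶ Z) (b : Z ⟶ W) :
    (e.comp (Ext.mk₀ a) (add_zero 1)).comp (Ext.mk₀ b) (add_zero 1) =
      e.comp (Ext.mk₀ (a ≫ b)) (add_zero 1) := by
  rw [Ext.comp_assoc_of_third_deg_zero, Ext.mk₀_comp_mk₀]

theorem stmt4 {K K' : A} (hK' : InAdd K K') (Y : A) :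
    Function.Bijective (pushHom K K' Y) ∧
    (∀ e e' : Ext Y K' 1, pushHom K K' Y (e + e') = pushHom K K' Y e + pushHom K K' Y e') := by
  classical
  obtain ⟨n, s, r, hsr⟩ := hK'
  set π := fun i : Fin n => biproduct.π (fun _ : Fin n => K) i
  set ι := fun i : Fin n => biproduct.ι (fun _ : Fin n => K) i
  have h1 : (∑ i : Fin n, (s ≫ π i) ≫ (ι i ≫ r)) = 𝟙 K' := by
    have h : ∑ i : Fin n, (s ≫ π i) ≫ (ι i ≫ r)
        = s ≫ (∑ i : Fin n, π i ≫ ι i) ≫ r := by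
      rw [Preadditive.sum_comp, Preadditive.comp_sum]
      simp only [Category.assoc]
    rw [h, biproduct.total, Category.id_comp, hsr]
  have key : ∀ e : Ext Y K' 1,
      e = ∑ i : Fin n, (e.comp (Ext.mk₀ (s ≫ π i)) (add_zero 1)).comp
          (Ext.mk₀ (ι i ≫ r)) (add_zero 1) := by
    intro e
    conv_lhs => rw [← Ext.comp_mk₀_id e, ← h1]
    rw [Ext.mk₀_sum', Ext.comp_sum']
    congr 1
    funext i
    rw [Ext.comp_mk₀_comp_mk₀]
  refine ⟨⟨?_, ?_⟩, ?_⟩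
  · intro e e' h
    rw [key e, key e']
    congr 1
    funext i
    have : (pushHom K K' Y e) (s ≫ π i) = (pushHom K K' Y e') (s ≫ π i) := by rw [h]
    simpa [pushHom] using congrArg (fun x => x.comp (Ext.mk₀ (ι i ≫ r)) (add_zero 1)) this
  · intro φ
    refine ⟨∑ i : Fin n, (φ (s ≫ π i)).comp (Ext.mk₀ (ι i ≫ r)) (add_zero 1), ?_⟩
    apply LinearMap.ext
    intro f
    show (∑ i : Fin n, (φ (s ≫ π i)).comp (Ext.mk₀ (ι i ≫ r)) (add_zero 1)).comp
        (Ext.mk₀ f) (add_zero 1) = φ f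
    rw [Ext.sum_comp']
    have h2 : ∀ i : Fin n,
        ((φ (s ≫ π i)).comp (Ext.mk₀ (ι i ≫ r)) (add_zero 1)).comp (Ext.mk₀ f) (add_zero 1)
          = φ ((s ≫ π i) ≫ (ι i ≫ r) ≫ f) := by
      intro i
      rw [Ext.comp_mk₀_comp_mk₀]
      have h3 := φ.map_smul (((ι i ≫ r) ≫ f : K ⟶ K) : End K) (s ≫ π i)
      rw [End.smul_right, extSmul_def] at h3
      simp only [Category.assoc] at h3 ⊢
      exact h3.symm
    rw [Finset.sum_congr rfl (fun i _ => h2 i), ← map_sum]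
    congr 1
    have h4 := congrArg (fun g => g ≫ f) h1
    simpa only [Preadditive.sum_comp, Category.assoc, Category.id_comp] using h4
  · intro e e'
    apply LinearMap.ext
    intro f
    show Ext.comp (e + e') (Ext.mk₀ f) (add_zero 1) = _
    rw [Ext.add_comp]
    rfl
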